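/- For every ρ > 0 there exists a finite subset E of M_1^{(0),N}(Z_+) such that sup_{z ∈ M_1^{(0),N}(Z_+)} E_z[ exp( ρ · (ext ∧ τ_E) ) ] < ∞, where τ_E = inf{ t ≥ 0 : Z^N(t) ∈ E } is the first hitting time of E and ext = inf{ t ≥ 0 : Z^N(t)(0) = 0 } is the clicking (extinction) time. -/

import Mathlib

open scoped BigOperators Classical ENNReal NNReal

noncomputable section

namespace MullerRatchet

/-- A population state: counts of individuals per number of deleterious mutations,
totalling `N` individuals.  This is the (count version of the) space `M_1^N(Z_+)`. -/
def State (N : ℕ) : Type := {z : ℕ →₀ ℕ // z.sum (fun _ n => n) = N}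

/-- Total selective weight `Σ_i z(i) (1-α)^i` of a population. -/
def totalWeight (N : ℕ) (α : ℝ) (z : State N) : ℝ :=
  z.1.sum fun i n => (n : ℝ) * (1 - α) ^ i

/-- Probability that one offspring chooses a parent carrying `i` mutations. -/
def parentProb (N : ℕ) (α : ℝ) (z : State N) (i : ℕ) : ℝ :=
  ((z.1 i : ℝ) * (1 - α) ^ i) / totalWeight N α z

/-- The Poisson(`lam`) probability mass function. -/
def poissonPMF (lam : ℝ) (k : ℕ) : ℝ :=
  Real.exp (-lam) * lam ^ k / (Nat.factorial k : ℝ)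

/-- Law of the number of mutations of one offspring: parent's type `i` plus an
independent Poisson(`lam`) number of new mutations. -/
def offspringProb (N : ℕ) (α lam : ℝ) (z : State N) (m : ℕ) : ℝ :=
  ∑ i ∈ Finset.range (m + 1), parentProb N α z i * poissonPMF lam (m - i)

/-- Empirical counts of the types of the `N` offspring. -/
def empCount (N : ℕ) (f : Fin N → ℕ) (m : ℕ) : ℕ :=
  (Finset.univ.filter fun n => f n = m).card

/-- One-step transition probability `P_z(Z^N(1) = y)` of Haigh's Muller-ratchet chain:
the `N` offspring choose their types independently according to `offspringProb`. -/
def step (N : ℕ) (α lam : ℝ) (z y : State N) : ℝ :=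
  ∑' f : Fin N → ℕ,
    if ∀ m, y.1 m = empCount N f m then ∏ n : Fin N, offspringProb N α lam z (f n) else 0


/-- Iterated kernel of the chain killed both when the fittest class dies out
(`y(0) = 0`) and when entering the set `E`. -/
def iterBoth (N : ℕ) (α lam : ℝ) (E : Set (State N)) :
    ℕ → State N → State N → ℝ
  | 0, z, y => if z = y then 1 else 0
  | t + 1, z, y =>
      ∑' w : State N,
        (if 1 ≤ w.1 0 ∧ w ∉ E then step N α lam z w else 0) * iterBoth N α lam E t w y

/-- `P_z(t < ext ∧ t < τ_E)`: the probability that, up to time `t`, the chain has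
neither clicked (lost its fittest class) nor entered `E`. -/
def survBoth (N : ℕ) (α lam : ℝ) (E : Set (State N)) (t : ℕ) (z : State N) : ℝ :=
  if 1 ≤ z.1 0 ∧ z ∉ E then ∑' y : State N, iterBoth N α lam E t z y else 0

/-- `E_z[exp(ρ (ext ∧ τ_E))]` for the integer-valued stopping time `T = ext ∧ τ_E`,
computed (in `ℝ≥0∞`, so that divergence is meaningful) via
`E[e^{ρT}] = 1 + (e^ρ - 1) Σ_{k≥0} e^{ρ k} P(T > k)`. -/
def expMoment (N : ℕ) (α lam : ℝ) (E : Set (State N)) (ρ : ℝ) (z : State N) : ℝ≥0∞ :=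
  1 + ENNReal.ofReal (Real.exp ρ - 1) *
      ∑' k : ℕ, ENNReal.ofReal (Real.exp (ρ * k)) *
        ENNReal.ofReal (survBoth N α lam E k z)

section Aux

variable {N : ℕ} {α lam : ℝ}

lemma state_apply_le (z : State N) (i : ℕ) : z.1 i ≤ N := by
  classical
  by_cases hi : i ∈ z.1.support
  · have h1 : z.1 i ≤ z.1.sum (fun _ n => n) := by
      rw [Finsupp.sum]
      exact Finset.single_le_sum (fun a _ => Nat.zero_le _) hi
    rw [z.2] at h1
    exact h1
  · rw [Finsupp.notMem_support_iff.mp hi]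
    exact Nat.zero_le _

lemma totalWeight_pos (hN : 1 ≤ N) (hα1 : α < 1) (z : State N) :
    0 < totalWeight N α z := by
  have hsupp : z.1.support.Nonempty := by
    rw [Finsupp.support_nonempty_iff]
    intro h
    have h2 := z.2
    rw [h] at h2
    simp [Finsupp.sum_zero_index] at h2
    omega
  rw [totalWeight, Finsupp.sum]
  apply Finset.sum_pos _ hsupp
  intro i hi
  have h1 : 1 ≤ z.1 i := Nat.one_le_iff_ne_zero.mpr (Finsupp.mem_support_iff.mp hi)
  have : (0:ℝ) < z.1 i := by exact_mod_cast h1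
  exact mul_pos this (pow_pos (by linarith) i)

lemma totalWeight_ge_one (hα1 : α < 1) (z : State N) (hz : 1 ≤ z.1 0) :
    (1:ℝ) ≤ totalWeight N α z := by
  have h0 : 0 ∈ z.1.support := Finsupp.mem_support_iff.mpr (by omega)
  rw [totalWeight, Finsupp.sum]
  calc (1:ℝ) ≤ (z.1 0 : ℝ) * (1-α)^0 := by
        simp only [pow_zero, mul_one]
        exact_mod_cast hz
    _ ≤ _ := Finset.single_le_sum
        (f := fun i => (z.1 i : ℝ) * (1-α)^i)
        (fun i _ => mul_nonneg (Nat.cast_nonneg _) (pow_nonneg (by linarith) i)) h0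

lemma parentProb_nonneg (hN : 1 ≤ N) (hα1 : α < 1) (z : State N) (i : ℕ) :
    0 ≤ parentProb N α z i :=
  div_nonneg (mul_nonneg (Nat.cast_nonneg _) (pow_nonneg (by linarith) i))
    (totalWeight_pos hN hα1 z).le

lemma poissonPMF_nonneg (hlam : 0 ≤ lam) (k : ℕ) : 0 ≤ poissonPMF lam k := by
  unfold poissonPMF
  positivity

lemma offspringProb_nonneg (hN : 1 ≤ N) (hα1 : α < 1) (hlam : 0 ≤ lam)
    (z : State N) (m : ℕ) : 0 ≤ offspringProb N α lam z m :=
  Finset.sum_nonneg fun i _ =>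
    mul_nonneg (parentProb_nonneg hN hα1 z i) (poissonPMF_nonneg hlam _)

lemma step_nonneg (hN : 1 ≤ N) (hα1 : α < 1) (hlam : 0 ≤ lam) (z y : State N) :
    0 ≤ step N α lam z y := by
  refine tsum_nonneg fun f => ?_
  split
  · exact Finset.prod_nonneg fun n _ => offspringProb_nonneg hN hα1 hlam z _
  · exact le_refl 0

end Aux

section Aux2

open ENNReal

variable {N : ℕ} {α lam : ℝ}

lemma ofReal_tsum_le {ι : Type*} (f : ι → ℝ) (hf : ∀ x, 0 ≤ f x) :
    ENNReal.ofReal (∑' x, f x) ≤ ∑' x, ENNReal.ofReal (f x) := by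
  by_cases h : Summable f
  · rw [ENNReal.ofReal_tsum_of_nonneg hf h]
  · rw [tsum_eq_zero_of_not_summable h]
    simp

lemma par_tsum_le_one (hN : 1 ≤ N) (hα1 : α < 1) (z : State N) :
    ∑' i, ENNReal.ofReal (parentProb N α z i) ≤ 1 := by
  have hW := totalWeight_pos hN hα1 z
  rw [tsum_eq_sum (s := z.1.support)
      (fun i hi => by simp [parentProb, Finsupp.notMem_support_iff.mp hi]),
    ← ENNReal.ofReal_sum_of_nonneg (fun i _ => parentProb_nonneg hN hα1 z i)]
  rw [ENNReal.ofReal_le_one]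
  simp only [parentProb]
  rw [← Finset.sum_div, div_le_one hW]
  apply le_of_eq
  rfl

lemma pois_tsum_le_one (hlam : 0 ≤ lam) :
    ∑' k, ENNReal.ofReal (poissonPMF lam k) ≤ 1 := by
  rw [ENNReal.tsum_eq_iSup_sum]
  apply iSup_le
  intro s
  obtain ⟨n, hn⟩ := s.exists_nat_subset_range
  calc ∑ k ∈ s, ENNReal.ofReal (poissonPMF lam k)
      ≤ ∑ k ∈ Finset.range n, ENNReal.ofReal (poissonPMF lam k) :=
        Finset.sum_le_sum_of_subset hn
    _ = ENNReal.ofReal (∑ k ∈ Finset.range n, poissonPMF lam k) :=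
        (ENNReal.ofReal_sum_of_nonneg fun k _ => poissonPMF_nonneg hlam k).symm
    _ ≤ 1 := by
        rw [ENNReal.ofReal_le_one]
        have h1 : ∑ k ∈ Finset.range n, poissonPMF lam k
            = Real.exp (-lam) * ∑ k ∈ Finset.range n, lam ^ k / (Nat.factorial k : ℝ) := by
          rw [Finset.mul_sum]
          exact Finset.sum_congr rfl fun k _ => by rw [poissonPMF, mul_div_assoc]
        rw [h1]
        calc Real.exp (-lam) * ∑ k ∈ Finset.range n, lam ^ k / (Nat.factorial k : ℝ)
            ≤ Real.exp (-lam) * Real.exp lam :=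
              mul_le_mul_of_nonneg_left (Real.sum_le_exp_of_nonneg hlam n)
                (Real.exp_nonneg _)
          _ = 1 := by rw [← Real.exp_add]; simp

lemma tsum_shift (c : ℕ → ℝ≥0∞) (i : ℕ) :
    ∑' m, (if i ≤ m then c m else 0) = ∑' j, c (i + j) := by
  have hinj : Function.Injective (fun j : ℕ => i + j) := fun a b h => by simpa using h
  have hsupp : Function.support (fun m => if i ≤ m then c m else 0) ⊆
      Set.range (fun j : ℕ => i + j) := by
    intro m hm
    simp only [Function.mem_support] at hm
    have him : i ≤ m := by by_contra h; simp [h] at hm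
    exact ⟨m - i, show i + (m - i) = m by omega⟩
  rw [← Function.Injective.tsum_eq hinj hsupp]
  exact tsum_congr fun j => by simp [Nat.le_add_right]

lemma off_ofReal (hN : 1 ≤ N) (hα1 : α < 1) (hlam : 0 ≤ lam) (z : State N) (m : ℕ) :
    ENNReal.ofReal (offspringProb N α lam z m) =
      ∑' i, (if i ≤ m then
        ENNReal.ofReal (parentProb N α z i) * ENNReal.ofReal (poissonPMF lam (m - i))
        else 0) := by
  rw [offspringProb,
    ENNReal.ofReal_sum_of_nonneg (fun i _ =>
      mul_nonneg (parentProb_nonneg hN hα1 z i) (poissonPMF_nonneg hlam _)),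
    tsum_eq_sum (s := Finset.range (m+1))
      (fun i hi => by rw [if_neg]; intro h; exact hi (Finset.mem_range.mpr (by omega)))]
  exact Finset.sum_congr rfl fun i hi => by
    rw [if_pos (by have := Finset.mem_range.mp hi; omega),
      ENNReal.ofReal_mul (parentProb_nonneg hN hα1 z i)]

lemma off_tsum_le_one (hN : 1 ≤ N) (hα1 : α < 1) (hlam : 0 ≤ lam) (z : State N) :
    ∑' m, ENNReal.ofReal (offspringProb N α lam z m) ≤ 1 := by
  calc ∑' m, ENNReal.ofReal (offspringProb N α lam z m)
      = ∑' m, ∑' i, (if i ≤ m then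
          ENNReal.ofReal (parentProb N α z i) * ENNReal.ofReal (poissonPMF lam (m - i))
          else 0) := tsum_congr fun m => off_ofReal hN hα1 hlam z m
    _ = ∑' i, ∑' m, (if i ≤ m then
          ENNReal.ofReal (parentProb N α z i) * ENNReal.ofReal (poissonPMF lam (m - i))
          else 0) := ENNReal.tsum_comm
    _ = ∑' i, ∑' j, ENNReal.ofReal (parentProb N α z i) *
          ENNReal.ofReal (poissonPMF lam (i + j - i)) :=
        tsum_congr fun i => tsum_shift
          (fun m => ENNReal.ofReal (parentProb N α z i) *
            ENNReal.ofReal (poissonPMF lam (m - i))) i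
    _ = ∑' i, ENNReal.ofReal (parentProb N α z i) *
          ∑' j, ENNReal.ofReal (poissonPMF lam j) := by
        simp only [Nat.add_sub_cancel_left, ENNReal.tsum_mul_left]
    _ ≤ ∑' i, ENNReal.ofReal (parentProb N α z i) * 1 :=
        ENNReal.tsum_le_tsum fun i => mul_le_mul_right (pois_tsum_le_one hlam) _
    _ ≤ 1 := by
        simp only [mul_one]
        exact par_tsum_le_one hN hα1 z

end Aux2

section Aux3

open ENNReal

variable {N : ℕ} {α lam : ℝ}

lemma par_le_geo (hα1 : α < 1) (z : State N) (hz : 1 ≤ z.1 0) (i : ℕ) :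
    ENNReal.ofReal (parentProb N α z i) ≤ ENNReal.ofReal ((N:ℝ) * (1-α)^i) := by
  apply ENNReal.ofReal_le_ofReal
  rw [parentProb]
  have hW := totalWeight_ge_one hα1 z hz
  have hnum : (0:ℝ) ≤ (z.1 i : ℝ) * (1-α)^i :=
    mul_nonneg (Nat.cast_nonneg _) (pow_nonneg (by linarith) i)
  calc (z.1 i : ℝ) * (1-α)^i / totalWeight N α z
      ≤ (z.1 i : ℝ) * (1-α)^i := div_le_self hnum hW
    _ ≤ (N:ℝ) * (1-α)^i := by
        apply mul_le_mul_of_nonneg_right _ (pow_nonneg (by linarith) i)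
        exact_mod_cast state_apply_le z i

lemma off_tail_le (hN : 1 ≤ N) (hα1 : α < 1) (hlam : 0 ≤ lam)
    (K0 K1 : ℕ) (z : State N) (hz : 1 ≤ z.1 0) :
    ∑' m, (if K0 + K1 < m then ENNReal.ofReal (offspringProb N α lam z m) else 0)
      ≤ (∑' t, ENNReal.ofReal (poissonPMF lam (K1 + t)))
        + ∑' t, ENNReal.ofReal ((N:ℝ) * (1-α)^(K0 + 1 + t)) := by
  set a : ℕ → ℝ≥0∞ := fun i => ENNReal.ofReal (parentProb N α z i) with ha
  set b : ℕ → ℝ≥0∞ := fun j => ENNReal.ofReal (poissonPMF lam j) with hb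
  set PT : ℝ≥0∞ := ∑' t, ENNReal.ofReal (poissonPMF lam (K1 + t)) with hPT
  have step1 : ∑' m, (if K0 + K1 < m then ENNReal.ofReal (offspringProb N α lam z m) else 0)
      = ∑' i, ∑' j, (if K0 + K1 < i + j then a i * b j else 0) := by
    have e1 : ∀ m, (if K0 + K1 < m then ENNReal.ofReal (offspringProb N α lam z m) else 0)
        = ∑' i, (if i ≤ m then (if K0 + K1 < m then a i * b (m - i) else 0) else 0) := by
      intro m
      by_cases hm : K0 + K1 < m
      · simp only [if_pos hm, off_ofReal hN hα1 hlam z m]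
        rfl
      · simp [hm]
    rw [tsum_congr e1, ENNReal.tsum_comm]
    apply tsum_congr
    intro i
    rw [tsum_shift (fun m => if K0 + K1 < m then a i * b (m - i) else 0) i]
    apply tsum_congr
    intro j
    simp only [Nat.add_sub_cancel_left]
  rw [step1]
  have step2 : ∀ i, (∑' j, (if K0 + K1 < i + j then a i * b j else 0))
      ≤ (if i ≤ K0 then a i * PT else ENNReal.ofReal ((N:ℝ) * (1-α)^i)) := by
    intro i
    by_cases hi : i ≤ K0
    · rw [if_pos hi]
      calc ∑' j, (if K0 + K1 < i + j then a i * b j else 0)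
          ≤ ∑' j, (if K1 ≤ j then a i * b j else 0) := by
            apply ENNReal.tsum_le_tsum
            intro j
            by_cases hj : K0 + K1 < i + j
            · rw [if_pos hj, if_pos (by omega)]
            · simp [hj]
        _ = a i * ∑' j, (if K1 ≤ j then b j else 0) := by
            rw [← ENNReal.tsum_mul_left]
            exact tsum_congr fun j => by by_cases hj : K1 ≤ j <;> simp [hj]
        _ = a i * PT := by rw [tsum_shift b K1]
    · rw [if_neg hi]
      calc ∑' j, (if K0 + K1 < i + j then a i * b j else 0)
          ≤ ∑' j, a i * b j := ENNReal.tsum_le_tsum fun j => by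
            split
            · exact le_rfl
            · exact zero_le
        _ = a i * ∑' j, b j := ENNReal.tsum_mul_left
        _ ≤ a i * 1 := mul_le_mul_right (pois_tsum_le_one hlam) _
        _ ≤ ENNReal.ofReal ((N:ℝ) * (1-α)^i) := by
            rw [mul_one]
            exact par_le_geo hα1 z hz i
  calc ∑' i, ∑' j, (if K0 + K1 < i + j then a i * b j else 0)
      ≤ ∑' i, (if i ≤ K0 then a i * PT else ENNReal.ofReal ((N:ℝ) * (1-α)^i)) :=
        ENNReal.tsum_le_tsum step2
    _ ≤ ∑' i, ((if i ≤ K0 then a i * PT else 0)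
          + (if i ≤ K0 then 0 else ENNReal.ofReal ((N:ℝ) * (1-α)^i))) :=
        ENNReal.tsum_le_tsum fun i => by by_cases hi : i ≤ K0 <;> simp [hi]
    _ = (∑' i, (if i ≤ K0 then a i * PT else 0))
          + ∑' i, (if i ≤ K0 then 0 else ENNReal.ofReal ((N:ℝ) * (1-α)^i)) :=
        ENNReal.tsum_add
    _ ≤ PT + ∑' t, ENNReal.ofReal ((N:ℝ) * (1-α)^(K0 + 1 + t)) := by
        apply add_le_add
        · calc ∑' i, (if i ≤ K0 then a i * PT else 0)
              ≤ ∑' i, a i * PT := ENNReal.tsum_le_tsum fun i => by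
                split
                · exact le_rfl
                · exact zero_le
            _ = (∑' i, a i) * PT := ENNReal.tsum_mul_right
            _ ≤ 1 * PT := mul_le_mul_left (par_tsum_le_one hN hα1 z) _
            _ = PT := one_mul _
        · apply le_of_eq
          have e2 : ∀ i, (if i ≤ K0 then 0 else ENNReal.ofReal ((N:ℝ) * (1-α)^i))
              = (if K0 + 1 ≤ i then ENNReal.ofReal ((N:ℝ) * (1-α)^i) else 0) := by
            intro i
            by_cases hi : i ≤ K0
            · rw [if_pos hi, if_neg (by omega)]
            · rw [if_neg hi, if_pos (by omega)]
          rw [tsum_congr e2, tsum_shift (fun i => ENNReal.ofReal ((N:ℝ) * (1-α)^i)) (K0+1)]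

lemma exists_cutoff (hN : 1 ≤ N) (hα0 : 0 < α) (hα1 : α < 1) (hlam : 0 ≤ lam)
    (δ : ℝ≥0∞) (hδ : δ ≠ 0) :
    ∃ K : ℕ, ∀ z : State N, 1 ≤ z.1 0 →
      ∑' m, (if K < m then ENNReal.ofReal (offspringProb N α lam z m) else 0) ≤ δ := by
  by_cases hδtop : δ = ⊤
  · exact ⟨0, fun z _ => by rw [hδtop]; exact le_top⟩
  have hhalf : (0:ℝ≥0∞) < δ / 2 := ENNReal.half_pos hδ
  -- Poisson tail
  have hbfin : ∑' k, ENNReal.ofReal (poissonPMF lam k) ≠ ⊤ :=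
    (lt_of_le_of_lt (pois_tsum_le_one hlam) ENNReal.one_lt_top).ne
  have h1 := ENNReal.tendsto_sum_nat_add (fun k => ENNReal.ofReal (poissonPMF lam k)) hbfin
  obtain ⟨K1, hK1⟩ := (h1.eventually_lt_const hhalf).exists
  -- geometric tail
  have hgeo : Summable (fun i => (N:ℝ) * (1-α)^i) :=
    (summable_geometric_of_lt_one (by linarith) (by linarith)).mul_left _
  have hgfin : ∑' i, ENNReal.ofReal ((N:ℝ) * (1-α)^i) ≠ ⊤ := by
    rw [← ENNReal.ofReal_tsum_of_nonneg
      (fun i => mul_nonneg (Nat.cast_nonneg _) (pow_nonneg (by linarith) i)) hgeo]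
    exact ENNReal.ofReal_ne_top
  have h2 := ENNReal.tendsto_sum_nat_add (fun i => ENNReal.ofReal ((N:ℝ) * (1-α)^i)) hgfin
  obtain ⟨M, hM⟩ := Filter.eventually_atTop.mp (h2.eventually_lt_const hhalf)
  refine ⟨M + K1, fun z hz => ?_⟩
  calc ∑' m, (if M + K1 < m then ENNReal.ofReal (offspringProb N α lam z m) else 0)
      ≤ (∑' t, ENNReal.ofReal (poissonPMF lam (K1 + t)))
        + ∑' t, ENNReal.ofReal ((N:ℝ) * (1-α)^(M + 1 + t)) :=
        off_tail_le hN hα1 hlam M K1 z hz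
    _ ≤ δ / 2 + δ / 2 := by
        apply add_le_add
        · apply le_of_lt
          have : (∑' t, ENNReal.ofReal (poissonPMF lam (K1 + t)))
              = ∑' t, ENNReal.ofReal (poissonPMF lam (t + K1)) :=
            tsum_congr fun t => by rw [Nat.add_comm]
          rw [this]
          exact hK1
        · apply le_of_lt
          have : (∑' t, ENNReal.ofReal ((N:ℝ) * (1-α)^(M + 1 + t)))
              = ∑' t, ENNReal.ofReal ((N:ℝ) * (1-α)^(t + (M + 1))) :=
            tsum_congr fun t => by rw [Nat.add_comm (M+1) t]
          rw [this]
          exact hM (M + 1) (by omega)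
    _ = δ := ENNReal.add_halves δ

end Aux3

section Aux4

open ENNReal

variable {N : ℕ} {α lam : ℝ}

/-- the empirical finsupp of a type profile -/
def empF (N : ℕ) (f : Fin N → ℕ) : ℕ →₀ ℕ := ∑ n : Fin N, Finsupp.single (f n) 1

lemma empF_apply (f : Fin N → ℕ) (m : ℕ) : empF N f m = empCount N f m := by
  rw [empF, Finsupp.finset_sum_apply, empCount, Finset.card_filter]
  exact Finset.sum_congr rfl fun n _ => by
    rw [Finsupp.single_apply]

lemma empF_sum (f : Fin N → ℕ) : (empF N f).sum (fun _ n => n) = N := by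
  rw [empF, ← Finsupp.sum_finsetSum_index (fun _ => rfl) (fun _ _ _ => rfl)]
  simp [Finsupp.sum_single_index]

def empState (N : ℕ) (f : Fin N → ℕ) : State N := ⟨empF N f, empF_sum f⟩

lemma eq_empState {f : Fin N → ℕ} {y : State N}
    (h : ∀ m, y.1 m = empCount N f m) : y = empState N f :=
  Subtype.ext (Finsupp.ext fun m => (h m).trans (empF_apply f m).symm)

/-- finitely many states supported in `[0,K]` -/
lemma goodSet_finite (K : ℕ) :
    {w : State N | 1 ≤ w.1 0 ∧ ∀ m, K < m → w.1 m = 0}.Finite := by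
  classical
  have hinj : Set.InjOn (fun w : State N => fun i : Fin (K+1) => w.1 i)
      {w : State N | 1 ≤ w.1 0 ∧ ∀ m, K < m → w.1 m = 0} := by
    intro w hw w' hw' h
    apply Subtype.ext
    apply Finsupp.ext
    intro m
    by_cases hm : K < m
    · rw [hw.2 m hm, hw'.2 m hm]
    · have := congrFun h ⟨m, by omega⟩
      simpa using this
  have hfin : ((fun w : State N => fun i : Fin (K+1) => w.1 i) ''
      {w : State N | 1 ≤ w.1 0 ∧ ∀ m, K < m → w.1 m = 0}).Finite := by
    apply Set.Finite.subset (Set.finite_Icc (fun _ : Fin (K+1) => 0) (fun _ => N))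
    rintro g ⟨w, _, rfl⟩
    exact ⟨fun i => Nat.zero_le _, fun i => state_apply_le w i⟩
  exact Set.Finite.of_finite_image hfin hinj

/-- product-form Fubini for `ℝ≥0∞`-valued products over `Fin n → ℕ` -/
lemma tsum_pi_prod : ∀ (n : ℕ) (g : Fin n → ℕ → ℝ≥0∞),
    ∑' f : Fin n → ℕ, ∏ i, g i (f i) = ∏ i, ∑' m, g i m := by
  intro n
  induction n with
  | zero =>
    intro g
    simp only [Finset.univ_eq_empty, Finset.prod_empty]
    rw [tsum_eq_single (fun i => i.elim0)]
    · intro f hf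
      exact absurd (Subsingleton.elim f _) hf
  | succ n ih =>
    intro g
    rw [← (Fin.consEquiv (fun _ : Fin (n+1) => ℕ)).tsum_eq, Fin.prod_univ_succ]
    have e1 : ∀ p : ℕ × (Fin n → ℕ), ∏ i : Fin (n+1), g i ((Fin.consEquiv (fun _ : Fin (n+1) => ℕ)) p i)
        = g 0 p.1 * ∏ i : Fin n, g i.succ (p.2 i) := by
      intro p
      rw [Fin.prod_univ_succ]
      simp [Fin.consEquiv]
    calc ∑' p : ℕ × (Fin n → ℕ), ∏ i : Fin (n+1), g i ((Fin.consEquiv (fun _ : Fin (n+1) => ℕ)) p i)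
        = ∑' p : ℕ × (Fin n → ℕ), g 0 p.1 * ∏ i : Fin n, g i.succ (p.2 i) :=
          tsum_congr e1
      _ = ∑' a : ℕ, ∑' b : Fin n → ℕ, g 0 a * ∏ i : Fin n, g i.succ (b i) :=
          ENNReal.tsum_prod'
      _ = ∑' a : ℕ, g 0 a * ∑' b : Fin n → ℕ, ∏ i : Fin n, g i.succ (b i) :=
          tsum_congr fun a => ENNReal.tsum_mul_left
      _ = (∑' a : ℕ, g 0 a) * ∑' b : Fin n → ℕ, ∏ i : Fin n, g i.succ (b i) :=
          ENNReal.tsum_mul_right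
      _ = (∑' m, g 0 m) * ∏ i : Fin n, ∑' m, g i.succ m := by rw [ih]

end Aux4

section Aux5

open ENNReal

variable {N : ℕ} {α lam : ℝ}

lemma one_step_le (hN : 1 ≤ N) (hα1 : α < 1) (hlam : 0 ≤ lam)
    (K : ℕ) (E : Set (State N))
    (hE : ∀ w : State N, 1 ≤ w.1 0 → (∀ m, K < m → w.1 m = 0) → w ∈ E)
    (z : State N) :
    ∑' w : State N, (if 1 ≤ w.1 0 ∧ w ∉ E then ENNReal.ofReal (step N α lam z w) else 0)
      ≤ (N : ℝ≥0∞) * ∑' m, (if K < m then ENNReal.ofReal (offspringProb N α lam z m) else 0) := by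
  classical
  set F : ℕ → ℝ≥0∞ := fun m => ENNReal.ofReal (offspringProb N α lam z m) with hF
  set Pf : (Fin N → ℕ) → ℝ≥0∞ := fun f => ∏ n, F (f n) with hPf
  set tail : ℝ≥0∞ := ∑' m, (if K < m then F m else 0) with htail
  -- Step A
  have stepA : ∀ w : State N,
      (if 1 ≤ w.1 0 ∧ w ∉ E then ENNReal.ofReal (step N α lam z w) else 0)
      ≤ ∑' f : Fin N → ℕ,
          (if (1 ≤ w.1 0 ∧ w ∉ E) ∧ (∀ m, w.1 m = empCount N f m) then Pf f else 0) := by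
    intro w
    by_cases hc : 1 ≤ w.1 0 ∧ w ∉ E
    · rw [if_pos hc]
      calc ENNReal.ofReal (step N α lam z w)
          ≤ ∑' f : Fin N → ℕ, ENNReal.ofReal
              (if ∀ m, w.1 m = empCount N f m
                then ∏ n : Fin N, offspringProb N α lam z (f n) else 0) := by
            rw [step]
            apply ofReal_tsum_le
            intro f
            split
            · exact Finset.prod_nonneg fun n _ => offspringProb_nonneg hN hα1 hlam z _
            · exact le_refl 0
        _ ≤ _ := by
            apply ENNReal.tsum_le_tsum
            intro f
            by_cases hf : ∀ m, w.1 m = empCount N f m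
            · rw [if_pos hf, if_pos ⟨hc, hf⟩,
                ENNReal.ofReal_prod_of_nonneg
                  (fun n _ => offspringProb_nonneg hN hα1 hlam z _)]
            · rw [if_neg hf, if_neg (fun h => hf h.2)]
              simp
    · rw [if_neg hc]
      exact zero_le
  calc ∑' w : State N, (if 1 ≤ w.1 0 ∧ w ∉ E then ENNReal.ofReal (step N α lam z w) else 0)
      ≤ ∑' w : State N, ∑' f : Fin N → ℕ,
          (if (1 ≤ w.1 0 ∧ w ∉ E) ∧ (∀ m, w.1 m = empCount N f m) then Pf f else 0) :=
        ENNReal.tsum_le_tsum stepA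
    _ = ∑' f : Fin N → ℕ, ∑' w : State N,
          (if (1 ≤ w.1 0 ∧ w ∉ E) ∧ (∀ m, w.1 m = empCount N f m) then Pf f else 0) :=
        ENNReal.tsum_comm
    _ = ∑' f : Fin N → ℕ,
          (if 1 ≤ (empState N f).1 0 ∧ empState N f ∉ E then Pf f else 0) := by
        apply tsum_congr
        intro f
        have e1 : (fun w : State N =>
            if (1 ≤ w.1 0 ∧ w ∉ E) ∧ (∀ m, w.1 m = empCount N f m) then Pf f else 0)
            = fun w : State N => if w = empState N f
                then (if 1 ≤ (empState N f).1 0 ∧ empState N f ∉ E then Pf f else 0)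
                else 0 := by
          funext w
          by_cases hw : w = empState N f
          · subst hw
            rw [if_pos rfl]
            by_cases hcE : 1 ≤ (empState N f).1 0 ∧ empState N f ∉ E
            · rw [if_pos hcE, if_pos ⟨hcE, fun m => empF_apply f m⟩]
            · rw [if_neg hcE, if_neg (fun h => hcE h.1)]
          · rw [if_neg hw, if_neg]
            rintro ⟨-, hall⟩
            exact hw (eq_empState hall)
        rw [e1, tsum_ite_eq]
    _ ≤ ∑' f : Fin N → ℕ, (if ∃ n, K < f n then Pf f else 0) := by
        apply ENNReal.tsum_le_tsum
        intro f
        by_cases hcE : 1 ≤ (empState N f).1 0 ∧ empState N f ∉ E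
        · rw [if_pos hcE]
          have hbad : ∃ n, K < f n := by
            by_contra hno
            push_neg at hno
            apply hcE.2
            apply hE _ hcE.1
            intro m hm
            rw [show (empState N f).1 m = empCount N f m from empF_apply f m]
            rw [empCount, Finset.card_eq_zero, Finset.filter_eq_empty_iff]
            intro n _
            intro hfn
            have := hno n
            omega
          rw [if_pos hbad]
        · rw [if_neg hcE]
          exact zero_le
    _ ≤ ∑' f : Fin N → ℕ, ∑ n0 : Fin N, (if K < f n0 then Pf f else 0) := by
        apply ENNReal.tsum_le_tsum
        intro f
        by_cases hb : ∃ n, K < f n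
        · obtain ⟨n₀, hn₀⟩ := hb
          rw [if_pos ⟨n₀, hn₀⟩]
          calc Pf f = (if K < f n₀ then Pf f else 0) := by rw [if_pos hn₀]
            _ ≤ ∑ n0 : Fin N, (if K < f n0 then Pf f else 0) :=
              Finset.single_le_sum (f := fun n : Fin N => if K < f n then Pf f else 0)
                (fun n _ => zero_le) (Finset.mem_univ n₀)
        · rw [if_neg hb]
          exact zero_le
    _ = ∑ n0 : Fin N, ∑' f : Fin N → ℕ, (if K < f n0 then Pf f else 0) :=
        Summable.tsum_finsetSum fun i _ => ENNReal.summable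
    _ ≤ ∑ _n0 : Fin N, tail := by
        apply Finset.sum_le_sum
        intro n0 _
        have e2 : ∀ f : Fin N → ℕ, (if K < f n0 then Pf f else 0)
            = ∏ n : Fin N, (if n = n0 then (fun m => if K < m then F m else 0) else F) (f n) := by
          intro f
          by_cases hc : K < f n0
          · rw [if_pos hc]
            apply Finset.prod_congr rfl
            intro i _
            by_cases hi : i = n0
            · subst hi
              simp [hc]
            · simp [hi]
          · rw [if_neg hc]
            symm
            apply Finset.prod_eq_zero (Finset.mem_univ n0)
            simp [hc]
        rw [tsum_congr e2, tsum_pi_prod]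
        rw [← Finset.mul_prod_erase Finset.univ _ (Finset.mem_univ n0)]
        calc (∑' m, (if n0 = n0 then (fun m => if K < m then F m else 0) else F) m)
              * ∏ n ∈ Finset.univ.erase n0,
                  ∑' m, (if n = n0 then (fun m => if K < m then F m else 0) else F) m
            ≤ tail * 1 := by
              apply mul_le_mul
              · apply le_of_eq
                simp [htail]
              · apply Finset.prod_le_one
                · intro n _
                  exact zero_le
                · intro n hn
                  rw [if_neg (Finset.ne_of_mem_erase hn)]
                  exact off_tsum_le_one hN hα1 hlam z
              · exact zero_le
              · exact zero_le
          _ = tail := mul_one _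
    _ = (N : ℝ≥0∞) * tail := by
        rw [Finset.sum_const, Finset.card_univ, Fintype.card_fin, nsmul_eq_mul]

end Aux5

section Aux6

open ENNReal

variable {N : ℕ} {α lam : ℝ}

lemma iterBoth_nonneg (hN : 1 ≤ N) (hα1 : α < 1) (hlam : 0 ≤ lam) (E : Set (State N)) :
    ∀ t (z y : State N), 0 ≤ iterBoth N α lam E t z y := by
  intro t
  induction t with
  | zero =>
    intro z y
    rw [iterBoth]
    split
    · exact zero_le_one
    · exact le_refl 0
  | succ t ih =>
    intro z y
    rw [iterBoth]
    apply tsum_nonneg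
    intro w
    apply mul_nonneg _ (ih w y)
    split
    · exact step_nonneg hN hα1 hlam z w
    · exact le_refl 0

lemma sum_iter_le (hN : 1 ≤ N) (hα1 : α < 1) (hlam : 0 ≤ lam) (E : Set (State N))
    (ε : ℝ≥0∞)
    (hstep : ∀ z : State N, 1 ≤ z.1 0 →
      ∑' w : State N,
        (if 1 ≤ w.1 0 ∧ w ∉ E then ENNReal.ofReal (step N α lam z w) else 0) ≤ ε) :
    ∀ t (z : State N), 1 ≤ z.1 0 →
      ∑' y : State N, ENNReal.ofReal (iterBoth N α lam E t z y) ≤ ε ^ t := by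
  intro t
  induction t with
  | zero =>
    intro z _
    rw [pow_zero]
    apply le_of_eq
    have e1 : (fun y : State N => ENNReal.ofReal (iterBoth N α lam E 0 z y))
        = fun y : State N => if y = z then 1 else 0 := by
      funext y
      rw [iterBoth]
      by_cases hy : z = y
      · rw [if_pos hy, if_pos hy.symm, ENNReal.ofReal_one]
      · rw [if_neg hy, if_neg (fun h => hy h.symm), ENNReal.ofReal_zero]
    rw [e1, tsum_ite_eq]
  | succ t ih =>
    intro z hz
    have key : ∀ y : State N, ENNReal.ofReal (iterBoth N α lam E (t+1) z y)
        ≤ ∑' w : State N,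
            (if 1 ≤ w.1 0 ∧ w ∉ E then ENNReal.ofReal (step N α lam z w) else 0) *
              ENNReal.ofReal (iterBoth N α lam E t w y) := by
      intro y
      rw [iterBoth]
      calc ENNReal.ofReal (∑' w : State N,
            (if 1 ≤ w.1 0 ∧ w ∉ E then step N α lam z w else 0) * iterBoth N α lam E t w y)
          ≤ ∑' w : State N, ENNReal.ofReal
              ((if 1 ≤ w.1 0 ∧ w ∉ E then step N α lam z w else 0) * iterBoth N α lam E t w y) := by
            apply ofReal_tsum_le
            intro w
            apply mul_nonneg _ (iterBoth_nonneg hN hα1 hlam E t w y)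
            split
            · exact step_nonneg hN hα1 hlam z w
            · exact le_refl 0
        _ ≤ _ := by
            apply ENNReal.tsum_le_tsum
            intro w
            rw [ENNReal.ofReal_mul (by
              split
              · exact step_nonneg hN hα1 hlam z w
              · exact le_refl 0)]
            apply mul_le_mul_left
            apply le_of_eq
            split
            · rfl
            · exact ENNReal.ofReal_zero
    calc ∑' y : State N, ENNReal.ofReal (iterBoth N α lam E (t+1) z y)
        ≤ ∑' y : State N, ∑' w : State N,
            (if 1 ≤ w.1 0 ∧ w ∉ E then ENNReal.ofReal (step N α lam z w) else 0) *
              ENNReal.ofReal (iterBoth N α lam E t w y) := ENNReal.tsum_le_tsum key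
      _ = ∑' w : State N,
            (if 1 ≤ w.1 0 ∧ w ∉ E then ENNReal.ofReal (step N α lam z w) else 0) *
              ∑' y : State N, ENNReal.ofReal (iterBoth N α lam E t w y) := by
          rw [ENNReal.tsum_comm]
          exact tsum_congr fun w => ENNReal.tsum_mul_left
      _ ≤ ∑' w : State N,
            (if 1 ≤ w.1 0 ∧ w ∉ E then ENNReal.ofReal (step N α lam z w) else 0) * ε ^ t := by
          apply ENNReal.tsum_le_tsum
          intro w
          by_cases hw : 1 ≤ w.1 0 ∧ w ∉ E
          · exact mul_le_mul_right (ih w hw.1) _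
          · simp [hw]
      _ = (∑' w : State N,
            (if 1 ≤ w.1 0 ∧ w ∉ E then ENNReal.ofReal (step N α lam z w) else 0)) * ε ^ t :=
          ENNReal.tsum_mul_right
      _ ≤ ε * ε ^ t := mul_le_mul_left (hstep z hz) _
      _ = ε ^ (t+1) := (pow_succ' ε t).symm

lemma survBoth_ofReal_le (hN : 1 ≤ N) (hα1 : α < 1) (hlam : 0 ≤ lam) (E : Set (State N))
    (ε : ℝ≥0∞)
    (hstep : ∀ z : State N, 1 ≤ z.1 0 →
      ∑' w : State N,
        (if 1 ≤ w.1 0 ∧ w ∉ E then ENNReal.ofReal (step N α lam z w) else 0) ≤ ε)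
    (t : ℕ) (z : State N) :
    ENNReal.ofReal (survBoth N α lam E t z) ≤ ε ^ t := by
  rw [survBoth]
  by_cases hz : 1 ≤ z.1 0 ∧ z ∉ E
  · rw [if_pos hz]
    calc ENNReal.ofReal (∑' y : State N, iterBoth N α lam E t z y)
        ≤ ∑' y : State N, ENNReal.ofReal (iterBoth N α lam E t z y) :=
          ofReal_tsum_le _ (fun y => iterBoth_nonneg hN hα1 hlam E t z y)
      _ ≤ ε ^ t := sum_iter_le hN hα1 hlam E ε hstep t z hz.1
  · rw [if_neg hz, ENNReal.ofReal_zero]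
    exact zero_le

end Aux6

/-- for every `ρ > 0` there is a finite subset `E` of `M_1^{(0),N}(Z_+)`
such that `sup_{z ∈ M_1^{(0),N}(Z_+)} E_z[exp(ρ (ext ∧ τ_E))] < ∞`. -/
theorem statement2 (N : ℕ) (hN : 1 ≤ N) (α lam : ℝ)
    (hα0 : 0 < α) (hα1 : α < 1) (hlam : 0 < lam)
    (ρ : ℝ) (hρ : 0 < ρ) :
    ∃ E : Finset (State N), (∀ z ∈ E, 1 ≤ z.1 0) ∧
      (⨆ z : {z : State N // 1 ≤ z.1 0},
          expMoment N α lam (↑E : Set (State N)) ρ z.1) < ⊤ := by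
  classical
  set ε : ℝ≥0∞ := ENNReal.ofReal (Real.exp (-ρ) / 2) with hε
  have hε0 : ε ≠ 0 := by
    rw [hε]
    exact (ENNReal.ofReal_pos.mpr (by positivity)).ne'
  have hδ : ε / (N : ℝ≥0∞) ≠ 0 := by
    apply ENNReal.div_ne_zero.mpr
    exact ⟨hε0, ENNReal.natCast_ne_top N⟩
  obtain ⟨K, hK⟩ := exists_cutoff hN hα0 hα1 hlam.le (ε / (N : ℝ≥0∞)) hδ
  refine ⟨(goodSet_finite (N := N) K).toFinset, ?_, ?_⟩
  · intro z hz
    exact ((Set.Finite.mem_toFinset _).mp hz).1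
  set E : Set (State N) := ↑(goodSet_finite (N := N) K).toFinset with hEdef
  have hEcond : ∀ w : State N, 1 ≤ w.1 0 → (∀ m, K < m → w.1 m = 0) → w ∈ E := by
    intro w h1 h2
    rw [hEdef, Finset.mem_coe, Set.Finite.mem_toFinset]
    exact ⟨h1, h2⟩
  clear_value E
  have hstep : ∀ z : State N, 1 ≤ z.1 0 →
      ∑' w : State N,
        (if 1 ≤ w.1 0 ∧ w ∉ E then ENNReal.ofReal (step N α lam z w) else 0) ≤ ε := by
    intro z hz
    calc ∑' w : State N,
          (if 1 ≤ w.1 0 ∧ w ∉ E then ENNReal.ofReal (step N α lam z w) else 0)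
        ≤ (N : ℝ≥0∞) * ∑' m, (if K < m then ENNReal.ofReal (offspringProb N α lam z m) else 0) :=
          one_step_le hN hα1 hlam.le K E hEcond z
      _ ≤ (N : ℝ≥0∞) * (ε / (N : ℝ≥0∞)) := mul_le_mul_right (hK z hz) _
      _ ≤ ε := ENNReal.mul_div_le
  have hsurv := survBoth_ofReal_le hN hα1 hlam.le E ε hstep
  -- the geometric ratio
  have hratio : ENNReal.ofReal (Real.exp ρ) * ε = ENNReal.ofReal 2⁻¹ := by
    rw [hε, ← ENNReal.ofReal_mul (Real.exp_nonneg ρ)]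
    congr 1
    rw [Real.exp_neg]
    field_simp
  have hr1 : ENNReal.ofReal (2⁻¹ : ℝ) < 1 := by
    rw [ENNReal.ofReal_lt_one]
    norm_num
  have hgeo_fin : (∑' k : ℕ, ENNReal.ofReal (2⁻¹ : ℝ) ^ k) ≠ ⊤ := by
    rw [ENNReal.tsum_geometric]
    apply ENNReal.inv_ne_top.mpr
    intro h0
    rw [tsub_eq_zero_iff_le] at h0
    exact absurd h0 (not_le.mpr hr1)
  set C : ℝ≥0∞ := 1 + ENNReal.ofReal (Real.exp ρ - 1) *
      ∑' k : ℕ, ENNReal.ofReal (2⁻¹ : ℝ) ^ k with hC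
  have hCtop : C < ⊤ := by
    rw [hC]
    apply ENNReal.add_lt_top.mpr
    constructor
    · exact ENNReal.one_lt_top
    · exact ENNReal.mul_lt_top ENNReal.ofReal_lt_top (hgeo_fin.lt_top)
  apply lt_of_le_of_lt _ hCtop
  apply iSup_le
  intro z
  rw [expMoment, hC]
  apply add_le_add_right
  apply mul_le_mul_right
  apply ENNReal.tsum_le_tsum
  intro k
  calc ENNReal.ofReal (Real.exp (ρ * k)) * ENNReal.ofReal (survBoth N α lam E k z.1)
      ≤ ENNReal.ofReal (Real.exp (ρ * k)) * ε ^ k := mul_le_mul_right (hsurv k z.1) _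
    _ = ENNReal.ofReal 2⁻¹ ^ k := by
        rw [mul_comm ρ (k:ℝ), Real.exp_nat_mul,
          ENNReal.ofReal_pow (Real.exp_nonneg ρ), ← mul_pow, hratio]

end MullerRatchet
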